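/- Let f : [0, ∞) → [0, ∞] and k : [0, ∞) → [0, ∞] be measurable. Then ∫_{ℝ²} ∫_{ℝ²} f(‖x‖)·f(‖y‖)·k(‖x − y‖) dx dy = 8π · ∫₀^∞ ( ∫_{ℝ²} f(‖x + (r,0)‖)·f(‖x − (r,0)‖) dx ) · k(2r) · r dr. -/

import Mathlib

open MeasureTheory

/-- The point `(r, 0)` of the Euclidean plane. -/
noncomputable def focalPoint (r : ℝ) : EuclideanSpace ℝ (Fin 2) :=
  (EuclideanSpace.equiv (Fin 2) ℝ).symm ![r, 0]

section Aux

open Set Metric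

local notation "E₂" => EuclideanSpace ℝ (Fin 2)

lemma norm_focalPoint (r : ℝ) : ‖focalPoint r‖ = |r| := by
  have h : ∀ i, focalPoint r i = ![r, 0] i := fun i => rfl
  rw [EuclideanSpace.norm_eq]
  simp [h, Fin.sum_univ_two, Real.sqrt_sq_eq_abs]

lemma continuous_focalPoint : Continuous focalPoint := by
  unfold focalPoint
  exact (EuclideanSpace.equiv (Fin 2) ℝ).symm.continuous.comp
    (continuous_pi fun i => by
      fin_cases i
      · simpa using continuous_id'
      · simpa using continuous_const)

/-- Radial integration in the Euclidean plane. -/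
lemma lintegral_fun_norm_euclidean (g : ℝ → ENNReal) (hg : Measurable g) :
    (∫⁻ x : E₂, g ‖x‖) =
      ENNReal.ofReal (2 * Real.pi) * ∫⁻ r in Set.Ioi (0:ℝ), g r * ENNReal.ofReal r := by
  have hdim : Module.finrank ℝ (EuclideanSpace ℝ (Fin 2)) = 2 := by
    simp [finrank_euclideanSpace]
  have h1 : (∫⁻ x : E₂, g ‖x‖)
      = ∫⁻ x : ({0}ᶜ : Set E₂), g ‖(x : E₂)‖ ∂((volume : Measure E₂).comap Subtype.val) := by
    rw [lintegral_subtype_comap (measurableSet_singleton (0:E₂)).compl (fun a => g ‖a‖),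
      restrict_compl_singleton]
  have hmp := Measure.measurePreserving_homeomorphUnitSphereProd (volume : Measure E₂)
  have h2 := hmp.lintegral_comp
    (f := fun p : sphere (0:E₂) 1 × Set.Ioi (0:ℝ) => g p.2)
    (hg.comp (measurable_subtype_coe.comp measurable_snd))
  simp only [homeomorphUnitSphereProd_apply_snd_coe] at h2
  rw [h1, h2, hdim]
  have hm : Measurable fun p : ↥(sphere (0:E₂) 1) × ↥(Ioi (0:ℝ)) => g ↑p.2 :=
    hg.comp (measurable_subtype_coe.comp measurable_snd)
  rw [lintegral_prod _ hm.aemeasurable]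
  simp only [lintegral_const]
  have h5 : (∫⁻ r : ↥(Ioi (0:ℝ)), g ↑r ∂(Measure.volumeIoiPow 1))
      = ∫⁻ r in Ioi (0:ℝ), g r * ENNReal.ofReal r := by
    have hd : Measurable fun r : ↥(Ioi (0:ℝ)) => ENNReal.ofReal ((r:ℝ) ^ 1) :=
      (measurable_subtype_coe.pow_const 1).ennreal_ofReal
    have hgs : Measurable fun r : ↥(Ioi (0:ℝ)) => g ↑r := hg.comp measurable_subtype_coe
    rw [Measure.volumeIoiPow, lintegral_withDensity_eq_lintegral_mul _ hd hgs]
    simp only [Pi.mul_apply]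
    rw [lintegral_subtype_comap measurableSet_Ioi (fun a => ENNReal.ofReal (a ^ 1) * g a)]
    refine setLIntegral_congr_fun measurableSet_Ioi (fun r _ => ?_)
    rw [pow_one, mul_comm]
  rw [h5]
  have hball : (volume : Measure E₂).toSphere Set.univ = ENNReal.ofReal (2 * Real.pi) := by
    rw [Measure.toSphere_apply_univ, hdim, EuclideanSpace.volume_ball]
    rw [show ((Fintype.card (Fin 2) : ℝ)) / 2 + 1 = 2 by norm_num, Real.Gamma_two,
      ENNReal.ofReal_mul (by norm_num : (0:ℝ) ≤ 2)]
    simp [Real.sq_sqrt Real.pi_nonneg]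
  rw [hball, mul_comm]

/-- Rotational invariance: the two-foci integral only depends on the distance between
the foci. -/
lemma lintegral_two_foci (f : ℝ → ENNReal) (hf : Measurable f) (a : E₂) :
    (∫⁻ u : E₂, f ‖u + a‖ * f ‖u - a‖) =
      ∫⁻ u : E₂, f ‖u + focalPoint ‖a‖‖ * f ‖u - focalPoint ‖a‖‖ := by
  set b : E₂ := focalPoint ‖a‖ with hb
  have hnorm : ‖b‖ = ‖a‖ := by rw [hb, norm_focalPoint, abs_of_nonneg (norm_nonneg a)]
  set T := Submodule.reflection (ℝ ∙ (b - a))ᗮ with hT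
  have hTb : T b = a := Submodule.reflection_sub hnorm
  have hmeas : Measurable fun u : E₂ => f ‖u + a‖ * f ‖u - a‖ :=
    ((hf.comp (measurable_id.add_const a).norm).mul
      (hf.comp (measurable_id.sub_const a).norm))
  have key := T.measurePreserving.lintegral_comp hmeas
  calc (∫⁻ u : E₂, f ‖u + a‖ * f ‖u - a‖)
      = ∫⁻ u : E₂, f ‖T u + a‖ * f ‖T u - a‖ := key.symm
    _ = ∫⁻ u : E₂, f ‖u + b‖ * f ‖u - b‖ := by
        refine lintegral_congr fun u => ?_
        rw [← hTb, ← map_add, ← map_sub, T.norm_map, T.norm_map]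

end Aux

/-- Reduction of the double spatial integral: for measurable `f, k : [0,∞) → [0,∞]`,
`∫_{ℝ²}∫_{ℝ²} f(‖x‖) f(‖y‖) k(‖x−y‖) dx dy
  = 8π ∫₀^∞ (∫_{ℝ²} f(‖x+(r,0)‖) f(‖x−(r,0)‖) dx) k(2r) r dr`. -/
theorem double_integral_reduction (f k : ℝ → ENNReal)
    (hf : Measurable f) (hk : Measurable k) :
    (∫⁻ y : EuclideanSpace ℝ (Fin 2), ∫⁻ x : EuclideanSpace ℝ (Fin 2),
        f ‖x‖ * f ‖y‖ * k ‖x - y‖) =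
      ENNReal.ofReal (8 * Real.pi) *
        ∫⁻ r in Set.Ioi (0:ℝ),
          (∫⁻ x : EuclideanSpace ℝ (Fin 2),
              f ‖x + focalPoint r‖ * f ‖x - focalPoint r‖) *
            k (2 * r) * ENNReal.ofReal r := by
  set E := EuclideanSpace ℝ (Fin 2)
  set G : ℝ → ENNReal :=
    fun r => ∫⁻ x : E, f ‖x + focalPoint r‖ * f ‖x - focalPoint r‖ with hGdef
  have mF : Measurable fun x : E => f ‖x‖ := hf.comp measurable_norm
  have hG : Measurable G := by
    refine Measurable.lintegral_prod_right'
      (f := fun p : ℝ × E => f ‖p.2 + focalPoint p.1‖ * f ‖p.2 - focalPoint p.1‖) ?_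
    exact ((hf.comp ((measurable_snd.add
        (continuous_focalPoint.measurable.comp measurable_fst)).norm)).mul
      (hf.comp ((measurable_snd.sub
        (continuous_focalPoint.measurable.comp measurable_fst)).norm)))
  have hH0 : Measurable fun s : ℝ => G (2⁻¹ * s) * k s :=
    (hG.comp (measurable_const_mul 2⁻¹)).mul hk
  have hH : Measurable fun s : ℝ => (G (2⁻¹ * s) * k s) * ENNReal.ofReal s :=
    hH0.mul measurable_id.ennreal_ofReal
  calc (∫⁻ y : E, ∫⁻ x : E, f ‖x‖ * f ‖y‖ * k ‖x - y‖)
      = ∫⁻ y : E, ∫⁻ w : E, f ‖w + y‖ * f ‖y‖ * k ‖w‖ := by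
        refine lintegral_congr fun y => ?_
        refine (lintegral_add_right_eq_self
          (fun x => f ‖x‖ * f ‖y‖ * k ‖x - y‖) y).symm.trans ?_
        exact lintegral_congr fun w => by rw [add_sub_cancel_right]
    _ = ∫⁻ w : E, ∫⁻ y : E, f ‖w + y‖ * f ‖y‖ * k ‖w‖ := by
        apply lintegral_lintegral_swap
        exact (((hf.comp (measurable_snd.add measurable_fst).norm).mul
          (hf.comp measurable_fst.norm)).mul (hk.comp measurable_snd.norm)).aemeasurable
    _ = ∫⁻ w : E, G (2⁻¹ * ‖w‖) * k ‖w‖ := by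
        refine lintegral_congr fun w => ?_
        have hmulw : Measurable fun y : E => f ‖w + y‖ * f ‖y‖ :=
          (hf.comp (measurable_const.add measurable_id).norm).mul mF
        rw [lintegral_mul_const _ hmulw]
        congr 1
        have step1 : (∫⁻ y : E, f ‖w + y‖ * f ‖y‖)
            = ∫⁻ u : E, f ‖u + (2⁻¹:ℝ) • w‖ * f ‖u - (2⁻¹:ℝ) • w‖ := by
          refine (lintegral_add_right_eq_self
            (fun y => f ‖w + y‖ * f ‖y‖) (-((2⁻¹:ℝ) • w))).symm.trans ?_
          refine lintegral_congr fun u => ?_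
          have e1 : w + (u + -((2⁻¹:ℝ) • w)) = u + (2⁻¹:ℝ) • w := by module
          have e2 : u + -((2⁻¹:ℝ) • w) = u - (2⁻¹:ℝ) • w := by module
          rw [e1, e2]
        rw [step1, lintegral_two_foci f hf ((2⁻¹:ℝ) • w)]
        have hsm : ‖(2⁻¹:ℝ) • w‖ = 2⁻¹ * ‖w‖ := by
          rw [norm_smul]; norm_num
        rw [hGdef, hsm]
    _ = ENNReal.ofReal (2 * Real.pi) *
          ∫⁻ s in Set.Ioi (0:ℝ), (G (2⁻¹ * s) * k s) * ENNReal.ofReal s :=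
        lintegral_fun_norm_euclidean _ hH0
    _ = ENNReal.ofReal (2 * Real.pi) *
          (4 * ∫⁻ r in Set.Ioi (0:ℝ), G r * k (2 * r) * ENNReal.ofReal r) := by
        congr 1
        set φ : ℝ → ENNReal :=
          (Set.Ioi (0:ℝ)).indicator (fun s => (G (2⁻¹ * s) * k s) * ENNReal.ofReal s) with hφ
        have hφm : Measurable φ := hH.indicator measurableSet_Ioi
        have h1 : (∫⁻ s in Set.Ioi (0:ℝ), (G (2⁻¹ * s) * k s) * ENNReal.ofReal s)
            = ∫⁻ s, φ s := (lintegral_indicator measurableSet_Ioi _).symm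
        have h2 : (∫⁻ r, φ (2 * r)) = ENNReal.ofReal |(2:ℝ)⁻¹| * ∫⁻ s, φ s := by
          rw [← lintegral_map hφm (measurable_const_mul 2),
            Real.map_volume_mul_left (two_ne_zero), lintegral_smul_measure, smul_eq_mul]
        have hofr : ENNReal.ofReal |(2:ℝ)⁻¹| = 2⁻¹ := by
          rw [abs_of_pos (by norm_num), ENNReal.ofReal_inv_of_pos (by norm_num)]
          norm_num
        have h3 : (∫⁻ s, φ s) = 2 * ∫⁻ r, φ (2 * r) := by
          rw [h2, hofr, ← mul_assoc,
            ENNReal.mul_inv_cancel two_ne_zero ENNReal.ofNat_ne_top, one_mul]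
        have h4 : (∫⁻ r, φ (2 * r))
            = ∫⁻ r in Set.Ioi (0:ℝ), (G r * k (2 * r) * ENNReal.ofReal r) * 2 := by
          have key : ∀ r : ℝ, φ (2 * r) = (Set.Ioi (0:ℝ)).indicator
              (fun r => (G r * k (2 * r) * ENNReal.ofReal r) * 2) r := by
            intro r
            rw [hφ]
            by_cases hr : r ∈ Set.Ioi (0:ℝ)
            · have hr' : (0:ℝ) < r := Set.mem_Ioi.1 hr
              have h2r : (2:ℝ) * r ∈ Set.Ioi (0:ℝ) := Set.mem_Ioi.2 (by linarith)
              rw [Set.indicator_of_mem hr, Set.indicator_of_mem h2r]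
              rw [show (2:ℝ)⁻¹ * (2 * r) = r by ring,
                ENNReal.ofReal_mul (by norm_num : (0:ℝ) ≤ 2), ENNReal.ofReal_ofNat]
              ring
            · have hr' : ¬ (0:ℝ) < r := fun h => hr (Set.mem_Ioi.2 h)
              rw [Set.indicator_of_notMem hr, Set.indicator_of_notMem
                (fun h => hr' (by have := Set.mem_Ioi.1 h; linarith))]
          simp_rw [key]
          rw [lintegral_indicator measurableSet_Ioi]
        have hGk : Measurable fun r : ℝ => G r * k (2 * r) * ENNReal.ofReal r :=
          (hG.mul (hk.comp (measurable_const_mul 2))).mul measurable_id.ennreal_ofReal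
        rw [h1, h3, h4, lintegral_mul_const _ hGk]
        ring
    _ = ENNReal.ofReal (8 * Real.pi) *
          ∫⁻ r in Set.Ioi (0:ℝ), G r * k (2 * r) * ENNReal.ofReal r := by
        rw [show (8:ℝ) * Real.pi = 4 * (2 * Real.pi) by ring,
          ENNReal.ofReal_mul (by norm_num : (0:ℝ) ≤ 4), ENNReal.ofReal_ofNat]
        ring
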